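/- Let m, n ∈ ℕ, p ∈ [1, ∞], A a real m×n matrix, b ∈ ℝᵐ, λ > 0, β ≥ 0. Let x̄ ∈ ℝⁿ with x̄ ≠ 0 and set v̄ := x̄ / ‖x̄‖₂. Define f(x) := ‖Ax − b‖_p + λ(‖x‖₁ − β‖x‖₂). Then the following are equivalent: (i) for every d ∈ ℝⁿ, liminf_{t → 0⁺} ( f(x̄ + t·d) − f(x̄) ) / t ≥ 0 (i.e., x̄ is a d-stationary point of f); (ii) there exist σ ≥ 0 and τ ≥ 0 such that x̄ is a global minimizer of x ↦ ‖Ax − b‖_p + λ‖x‖₁ − λβ⟨v̄, x⟩ + (σ/2)‖x − x̄‖₂² + (τ/2)‖A(x − x̄)‖₂². -/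

import Mathlib

set_option maxHeartbeats 1000000


open Filter
open scoped ENNReal RealInnerProductSpace

noncomputable def lpNorm (p : ℝ≥0∞) [Fact (1 ≤ p)] {m : ℕ} (y : Fin m → ℝ) : ℝ :=
  ‖(WithLp.equiv p (Fin m → ℝ)).symm y‖

noncomputable def l2Norm {m : ℕ} (y : Fin m → ℝ) : ℝ :=
  ‖(WithLp.equiv 2 (Fin m → ℝ)).symm y‖

noncomputable def l1Norm {n : ℕ} (x : Fin n → ℝ) : ℝ := ∑ i, |x i|

lemma lpNorm_add_le (p : ℝ≥0∞) [Fact (1 ≤ p)] {m : ℕ} (u v : Fin m → ℝ) :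
    lpNorm p (u + v) ≤ lpNorm p u + lpNorm p v := by
  simp only [lpNorm, WithLp.equiv_symm_apply, WithLp.toLp_add]
  exact norm_add_le _ _

lemma lpNorm_smul (p : ℝ≥0∞) [Fact (1 ≤ p)] {m : ℕ} (c : ℝ) (u : Fin m → ℝ) :
    lpNorm p (c • u) = |c| * lpNorm p u := by
  simp only [lpNorm, WithLp.equiv_symm_apply, WithLp.toLp_smul, norm_smul, Real.norm_eq_abs]

lemma l2Norm_smul {m : ℕ} (c : ℝ) (u : Fin m → ℝ) :
    l2Norm (c • u) = |c| * l2Norm u := by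
  simp only [l2Norm, WithLp.equiv_symm_apply, WithLp.toLp_smul, norm_smul, Real.norm_eq_abs]

lemma l1Norm_combo {n : ℕ} (a c : ℝ) (ha : 0 ≤ a) (hc : 0 ≤ c) (x y : Fin n → ℝ) :
    l1Norm (a • x + c • y) ≤ a * l1Norm x + c * l1Norm y := by
  simp only [l1Norm, Finset.mul_sum]
  rw [← Finset.sum_add_distrib]
  refine Finset.sum_le_sum fun i _ => ?_
  calc |(a • x + c • y) i| = |a * x i + c * y i| := by simp [Pi.add_apply]
    _ ≤ |a * x i| + |c * y i| := abs_add_le _ _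
    _ = a * |x i| + c * |y i| := by
        rw [abs_mul, abs_mul, abs_of_nonneg ha, abs_of_nonneg hc]

/-- Lemma 3.3: `x̄ ≠ 0` is a d-stationary point of `f` iff it globally minimizes the
proximal majorization `f̃(·; σ, τ, v̄, x̄, Ax̄)` for some `σ, τ ≥ 0`. -/
theorem stmt_5 {m n : ℕ} (p : ℝ≥0∞) [Fact (1 ≤ p)]
    (A : Matrix (Fin m) (Fin n) ℝ) (b : Fin m → ℝ) (lam β : ℝ)
    (hlam : 0 < lam) (hβ : 0 ≤ β)
    (xbar : EuclideanSpace ℝ (Fin n)) (hxbar : xbar ≠ 0)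
    (vbar : EuclideanSpace ℝ (Fin n)) (hvbar : vbar = ‖xbar‖⁻¹ • xbar)
    (f : EuclideanSpace ℝ (Fin n) → ℝ)
    (hf : ∀ x, f x = lpNorm p (A.mulVec x - b) + lam * (l1Norm x - β * ‖x‖)) :
    (∀ d : EuclideanSpace ℝ (Fin n),
        0 ≤ Filter.liminf (fun t : ℝ => (f (xbar + t • d) - f xbar) / t)
            (nhdsWithin 0 (Set.Ioi 0)))
      ↔ ∃ σ τ : ℝ, 0 ≤ σ ∧ 0 ≤ τ ∧
          ∀ x : EuclideanSpace ℝ (Fin n),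
            lpNorm p (A.mulVec xbar - b) + lam * l1Norm xbar - lam * β * ⟪vbar, xbar⟫
                + σ / 2 * ‖xbar - xbar‖ ^ 2 + τ / 2 * l2Norm (A.mulVec (xbar - xbar)) ^ 2
              ≤ lpNorm p (A.mulVec x - b) + lam * l1Norm x - lam * β * ⟪vbar, x⟫
                + σ / 2 * ‖x - xbar‖ ^ 2 + τ / 2 * l2Norm (A.mulVec (x - xbar)) ^ 2 := by
  have hx0 : (0:ℝ) < ‖xbar‖ := norm_pos_iff.mpr hxbar
  set g : EuclideanSpace ℝ (Fin n) → ℝ :=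
    fun x => lpNorm p (A.mulVec x - b) + lam * l1Norm x - lam * β * ⟪vbar, x⟫ with hg
  have hvx : ⟪vbar, xbar⟫ = ‖xbar‖ := by
    rw [hvbar, real_inner_smul_left, real_inner_self_eq_norm_sq]
    field_simp
  have hvnorm : ‖vbar‖ = 1 := by
    rw [hvbar, norm_smul, Real.norm_eq_abs, abs_of_nonneg (inv_nonneg.mpr hx0.le)]
    field_simp
  have hinner_le : ∀ x : EuclideanSpace ℝ (Fin n), ⟪vbar, x⟫ ≤ ‖x‖ := fun x =>
    le_trans (real_inner_le_norm _ _) (by rw [hvnorm, one_mul])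
  have hfg : ∀ x, f x = g x + lam * β * (⟪vbar, x⟫ - ‖x‖) := fun x => by
    rw [hf, hg]; ring
  have hfgx : f xbar = g xbar := by rw [hfg, hvx]; ring
  have hfle : ∀ x, f x ≤ g x := fun x => by
    rw [hfg]
    nlinarith [hinner_le x, mul_nonneg hlam.le hβ]
  -- linearity of mulVec on combinations
  have hmul : ∀ (a c : ℝ) (x y : EuclideanSpace ℝ (Fin n)),
      A.mulVec (a • x + c • y) = a • A.mulVec x + c • A.mulVec y := by
    intro a c x y
    funext i
    simp only [Matrix.mulVec, dotProduct, Pi.add_apply, Pi.smul_apply, smul_eq_mul,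
      PiLp.add_apply, PiLp.smul_apply, Finset.mul_sum]
    rw [← Finset.sum_add_distrib]
    refine Finset.sum_congr rfl fun j _ => by ring
  -- convexity of g
  have hgconv : ∀ (x y : EuclideanSpace ℝ (Fin n)) (a c : ℝ), 0 ≤ a → 0 ≤ c → a + c = 1 →
      g (a • x + c • y) ≤ a * g x + c * g y := by
    intro x y a c ha hc hac
    have h1 : A.mulVec (a • x + c • y) - b = a • (A.mulVec x - b) + c • (A.mulVec y - b) := by
      rw [hmul]
      funext i
      simp only [Pi.add_apply, Pi.sub_apply, Pi.smul_apply, smul_eq_mul]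
      have : a * b i + c * b i = b i := by rw [← add_mul, hac, one_mul]
      linarith [this]
    have hP : lpNorm p (A.mulVec (a • x + c • y) - b)
        ≤ a * lpNorm p (A.mulVec x - b) + c * lpNorm p (A.mulVec y - b) := by
      rw [h1]
      calc lpNorm p (a • (A.mulVec x - b) + c • (A.mulVec y - b))
          ≤ lpNorm p (a • (A.mulVec x - b)) + lpNorm p (c • (A.mulVec y - b)) :=
            lpNorm_add_le _ _ _
        _ = a * lpNorm p (A.mulVec x - b) + c * lpNorm p (A.mulVec y - b) := by
            rw [lpNorm_smul, lpNorm_smul, abs_of_nonneg ha, abs_of_nonneg hc]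
    have hL1 : l1Norm ((a • x + c • y : EuclideanSpace ℝ (Fin n)) : Fin n → ℝ)
        ≤ a * l1Norm (x : Fin n → ℝ) + c * l1Norm (y : Fin n → ℝ) := by
      have := l1Norm_combo a c ha hc (x : Fin n → ℝ) (y : Fin n → ℝ)
      convert this using 2
      exact rfl
    have hIn : ⟪vbar, a • x + c • y⟫ = a * ⟪vbar, x⟫ + c * ⟪vbar, y⟫ := by
      rw [inner_add_right, real_inner_smul_right, real_inner_smul_right]
    rw [hg]
    simp only [hIn]
    simp only [WithLp.ofLp_add, WithLp.ofLp_smul] at hL1 ⊢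
    nlinarith [hP, hL1, hlam.le]
  -- the key limit
  have hlim : ∀ d : EuclideanSpace ℝ (Fin n),
      Tendsto (fun t : ℝ => (‖xbar + t • d‖ - ‖xbar‖) / t) (nhdsWithin 0 (Set.Ioi 0))
        (nhds ⟪vbar, d⟫) := by
    intro d
    have hcont : Tendsto (fun t : ℝ => (2 * ⟪xbar, d⟫ + t * ‖d‖ ^ 2) / (‖xbar + t • d‖ + ‖xbar‖))
        (nhdsWithin 0 (Set.Ioi 0)) (nhds ⟪vbar, d⟫) := by
      have hnum : Tendsto (fun t : ℝ => 2 * ⟪xbar, d⟫ + t * ‖d‖ ^ 2) (nhds 0)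
          (nhds (2 * ⟪xbar, d⟫)) := by
        have : Continuous fun t : ℝ => 2 * ⟪xbar, d⟫ + t * ‖d‖ ^ 2 :=
          continuous_const.add (continuous_id.mul continuous_const)
        simpa using this.tendsto 0
      have hden : Tendsto (fun t : ℝ => ‖xbar + t • d‖ + ‖xbar‖) (nhds 0)
          (nhds (2 * ‖xbar‖)) := by
        have : Continuous fun t : ℝ => ‖xbar + t • d‖ + ‖xbar‖ := by
          exact ((continuous_const.add (continuous_id.smul continuous_const)).norm).add
            continuous_const
        have h := this.tendsto 0
        simpa [two_mul] using h
      have hne : (2 : ℝ) * ‖xbar‖ ≠ 0 := by positivity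
      have := hnum.div hden hne
      have hval : 2 * ⟪xbar, d⟫ / (2 * ‖xbar‖) = ⟪vbar, d⟫ := by
        rw [hvbar, real_inner_smul_left]
        field_simp
      rw [hval] at this
      exact this.mono_left nhdsWithin_le_nhds
    refine hcont.congr' ?_
    filter_upwards [self_mem_nhdsWithin] with t ht
    have ht' : (0:ℝ) < t := ht
    have hden : (0:ℝ) < ‖xbar + t • d‖ + ‖xbar‖ := by positivity
    rw [div_eq_div_iff hden.ne' ht'.ne']
    have hsq : ‖xbar + t • d‖ ^ 2 = ‖xbar‖ ^ 2 + 2 * (t * ⟪xbar, d⟫) + t ^ 2 * ‖d‖ ^ 2 := by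
      rw [norm_add_sq_real, real_inner_smul_right, norm_smul, Real.norm_eq_abs,
        abs_of_nonneg ht'.le, mul_pow]
    nlinarith [hsq]
  -- relation of the two values of f along rays
  have hray : ∀ (d : EuclideanSpace ℝ (Fin n)) (t : ℝ), 0 < t →
      f (xbar + t • d) - f xbar
        = g (xbar + t • d) - g xbar
          - lam * β * t * ((‖xbar + t • d‖ - ‖xbar‖) / t - ⟪vbar, d⟫) := by
    intro d t ht
    rw [hfg (xbar + t • d), hfgx]
    have hIn : ⟪vbar, xbar + t • d⟫ = ‖xbar‖ + t * ⟪vbar, d⟫ := by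
      rw [inner_add_right, real_inner_smul_right, hvx]
    rw [hIn]
    field_simp
    ring
  constructor
  · -- stationarity implies global min with σ = τ = 0
    intro H
    refine ⟨0, 0, le_refl 0, le_refl 0, fun x => ?_⟩
    have hgoal : g xbar ≤ g x := by
      set d : EuclideanSpace ℝ (Fin n) := x - xbar with hd
      have hxd : ∀ t : ℝ, xbar + t • d = (1 - t) • xbar + t • x := by
        intro t; rw [hd]; module
      -- eventual upper bound of the quotient
      have hub : ∀ᶠ t in nhdsWithin (0:ℝ) (Set.Ioi 0),
          (f (xbar + t • d) - f xbar) / t ≤ g x - g xbar := by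
        filter_upwards [Ioo_mem_nhdsGT (zero_lt_one (α := ℝ))] with t ht
        obtain ⟨ht0, ht1⟩ := ht
        have hcv : g (xbar + t • d) ≤ (1 - t) * g xbar + t * g x := by
          rw [hxd]
          exact hgconv xbar x (1 - t) t (by linarith) ht0.le (by ring)
        have h1 : f (xbar + t • d) - f xbar ≤ t * (g x - g xbar) := by
          have := hfle (xbar + t • d)
          rw [hfgx]
          nlinarith
        rw [div_le_iff₀ ht0]
        linarith
      -- eventual lower bound of the quotient
      have hlb : ∀ᶠ t in nhdsWithin (0:ℝ) (Set.Ioi 0),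
          (g xbar - g (xbar - d)) + lam * β * (⟪vbar, d⟫ - ‖d‖)
            ≤ (f (xbar + t • d) - f xbar) / t := by
        filter_upwards [self_mem_nhdsWithin] with t ht
        have ht0 : (0:ℝ) < t := ht
        -- convexity: xbar = (t/(1+t)) • (xbar - d) + (1/(1+t)) • (xbar + t • d)
        have h1t : (0:ℝ) < 1 + t := by linarith
        have hmid : xbar = (t/(1+t)) • (xbar - d) + (1/(1+t)) • (xbar + t • d) := by
          match_scalars <;> (field_simp; try ring)
        have hcv : g xbar ≤ (t/(1+t)) * g (xbar - d) + (1/(1+t)) * g (xbar + t • d) := by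
          have h3 : t/(1+t) + 1/(1+t) = 1 := by field_simp <;> ring
          have := hgconv (xbar - d) (xbar + t • d) (t/(1+t)) (1/(1+t))
            (by positivity) (by positivity) h3
          rw [← hmid] at this
          exact this
        have hgd : t * (g xbar - g (xbar - d)) ≤ g (xbar + t • d) - g xbar := by
          have h' := mul_le_mul_of_nonneg_left hcv h1t.le
          have e1 : (1+t) * ((t/(1+t)) * g (xbar - d) + (1/(1+t)) * g (xbar + t • d))
              = t * g (xbar - d) + g (xbar + t • d) := by field_simp <;> ring
          rw [e1] at h'
          nlinarith
        have hnrm : ‖xbar + t • d‖ - ‖xbar‖ ≤ t * ‖d‖ := by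
          have := norm_add_le xbar (t • d)
          rw [norm_smul, Real.norm_eq_abs, abs_of_nonneg ht0.le] at this
          linarith
        have hfd := hray d t ht0
        rw [le_div_iff₀ ht0]
        have hlb0 : lam * β * (t * ⟪vbar, d⟫ - (‖xbar + t • d‖ - ‖xbar‖))
            ≥ lam * β * (t * ⟪vbar, d⟫ - t * ‖d‖) := by
          have := mul_nonneg hlam.le hβ
          nlinarith
        have expand : f (xbar + t • d) - f xbar
            = g (xbar + t • d) - g xbar
              + lam * β * (t * ⟪vbar, d⟫ - (‖xbar + t • d‖ - ‖xbar‖)) := by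
          rw [hfd]; field_simp; ring
        rw [expand]
        nlinarith [mul_nonneg hlam.le hβ]
      have hbdd : (nhdsWithin (0:ℝ) (Set.Ioi 0)).IsBoundedUnder (· ≥ ·)
          (fun t : ℝ => (f (xbar + t • d) - f xbar) / t) :=
        ⟨(g xbar - g (xbar - d)) + lam * β * (⟪vbar, d⟫ - ‖d‖), eventually_map.mpr hlb⟩
      have h1 : Filter.liminf (fun t : ℝ => (f (xbar + t • d) - f xbar) / t)
          (nhdsWithin 0 (Set.Ioi 0)) ≤ g x - g xbar :=
        liminf_le_of_frequently_le hub.frequently hbdd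
      have h2 : (0:ℝ) ≤ g x - g xbar := le_trans (H d) h1
      linarith
    have e0 : xbar - xbar = (0 : EuclideanSpace ℝ (Fin n)) := sub_self xbar
    rw [e0]
    have em : A.mulVec (0 : EuclideanSpace ℝ (Fin n)) = 0 := by
      funext i; simp [Matrix.mulVec, dotProduct]
    have e2 : l2Norm (A.mulVec (0 : EuclideanSpace ℝ (Fin n))) = 0 := by
      rw [em]; simp [l2Norm]
    rw [← WithLp.ofLp_sub (x := xbar) (y := xbar), e0, e2]
    simp only [norm_zero, zero_div, zero_mul, add_zero, ne_eq, zero_pow, mul_zero]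
    have := hgoal
    rw [hg] at this
    simp only at this
    linarith
  · -- global min implies stationarity
    rintro ⟨σ, τ, hσ, hτ, hmin⟩ d
    set C : ℝ := σ / 2 * ‖d‖ ^ 2 + τ / 2 * l2Norm (A.mulVec d) ^ 2 with hC
    set w : ℝ → ℝ := fun t => -(t * C) - lam * β * ((‖xbar + t • d‖ - ‖xbar‖) / t - ⟪vbar, d⟫)
      with hw
    have hwlim : Tendsto w (nhdsWithin (0:ℝ) (Set.Ioi 0)) (nhds 0) := by
      have h1 : Tendsto (fun t : ℝ => -(t * C)) (nhdsWithin (0:ℝ) (Set.Ioi 0)) (nhds 0) := by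
        have : Continuous fun t : ℝ => -(t * C) :=
          (continuous_id.mul continuous_const).neg
        have h := this.tendsto 0
        simp only [neg_zero, zero_mul] at h
        exact h.mono_left nhdsWithin_le_nhds
      have h2 : Tendsto (fun t : ℝ => lam * β * ((‖xbar + t • d‖ - ‖xbar‖) / t - ⟪vbar, d⟫))
          (nhdsWithin (0:ℝ) (Set.Ioi 0)) (nhds 0) := by
        have := ((hlim d).sub_const ⟪vbar, d⟫).const_mul (lam * β)
        simpa using this
      have := h1.sub h2
      simpa using this
    have hev : ∀ᶠ t in nhdsWithin (0:ℝ) (Set.Ioi 0),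
        w t ≤ (f (xbar + t • d) - f xbar) / t := by
      filter_upwards [self_mem_nhdsWithin] with t ht
      have ht0 : (0:ℝ) < t := ht
      -- apply minimality at x := xbar + t • d
      have hm := hmin (xbar + t • d)
      have e0 : xbar - xbar = (0 : EuclideanSpace ℝ (Fin n)) := sub_self xbar
      have ed : xbar + t • d - xbar = t • d := by abel
      have em : A.mulVec (0 : EuclideanSpace ℝ (Fin n)) = 0 := by
        funext i; simp [Matrix.mulVec, dotProduct]
      have e2 : l2Norm (A.mulVec (0 : EuclideanSpace ℝ (Fin n))) = 0 := by
        rw [em]; simp [l2Norm]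
      have etd : A.mulVec ((t • d : EuclideanSpace ℝ (Fin n)) : Fin n → ℝ)
          = t • A.mulVec (d : Fin n → ℝ) := by
        have := hmul t 0 d d
        simpa using this
      rw [e0, ← WithLp.ofLp_sub (x := xbar) (y := xbar), e0, e2, ← WithLp.ofLp_sub (x := xbar + t • d) (y := xbar), ed, etd] at hm
      rw [l2Norm_smul, abs_of_nonneg ht0.le] at hm
      have hnt : ‖t • d‖ = t * ‖d‖ := by
        rw [norm_smul, Real.norm_eq_abs, abs_of_nonneg ht0.le]
      rw [hnt] at hm
      simp only [norm_zero, zero_div, zero_mul, add_zero] at hm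
      -- hm : g xbar ≤ g (xbar + t•d) + σ/2 (t‖d‖)² + τ/2 (t l2Norm(Ad))²
      have hgd : g xbar - g (xbar + t • d) ≤ t ^ 2 * C := by
        rw [hg, hC]
        simp only
        nlinarith [hm]
      have hfd := hray d t ht0
      rw [le_div_iff₀ ht0]
      have : f (xbar + t • d) - f xbar
          = g (xbar + t • d) - g xbar
            - lam * β * t * ((‖xbar + t • d‖ - ‖xbar‖) / t - ⟪vbar, d⟫) := hfd
      rw [this, hw]
      have hq : -(t * C) * t ≤ g (xbar + t • d) - g xbar := by nlinarith
      nlinarith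
    have hwb : (nhdsWithin (0:ℝ) (Set.Ioi 0)).IsBoundedUnder (· ≥ ·) w :=
      hwlim.isBoundedUnder_ge
    -- cobounded: eventual upper bound on the quotient via convexity slope
    have hub : ∀ᶠ t in nhdsWithin (0:ℝ) (Set.Ioi 0),
        (f (xbar + t • d) - f xbar) / t ≤ g (xbar + d) - g xbar := by
      filter_upwards [Ioo_mem_nhdsGT (zero_lt_one (α := ℝ))] with t ht
      obtain ⟨ht0, ht1⟩ := ht
      have hxd : xbar + t • d = (1 - t) • xbar + t • (xbar + d) := by module
      have hcv : g (xbar + t • d) ≤ (1 - t) * g xbar + t * g (xbar + d) := by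
        rw [hxd]
        exact hgconv xbar (xbar + d) (1 - t) t (by linarith) ht0.le (by ring)
      have h1 : f (xbar + t • d) - f xbar ≤ t * (g (xbar + d) - g xbar) := by
        have := hfle (xbar + t • d)
        rw [hfgx]
        nlinarith
      rw [div_le_iff₀ ht0]
      linarith
    have hcb : (nhdsWithin (0:ℝ) (Set.Ioi 0)).IsCoboundedUnder (· ≥ ·)
        (fun t : ℝ => (f (xbar + t • d) - f xbar) / t) :=
      Filter.isCoboundedUnder_ge_of_eventually_le _ hub
    have h0 : Filter.liminf w (nhdsWithin (0:ℝ) (Set.Ioi 0)) = 0 := hwlim.liminf_eq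
    calc (0:ℝ) = Filter.liminf w (nhdsWithin (0:ℝ) (Set.Ioi 0)) := h0.symm
      _ ≤ Filter.liminf (fun t : ℝ => (f (xbar + t • d) - f xbar) / t)
          (nhdsWithin 0 (Set.Ioi 0)) := liminf_le_liminf hev hwb hcb
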